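/- Let G, H, K be pattern groups on {1,2,…,n} over F_q with G = H ⋉ K (that is, H and K are pattern subgroups of G, K is normal in G, G = HK, and H ∩ K = {1}). If (k−1)(h−1) = 0 (matrix product) for all h ∈ H and k ∈ K, then SInd_H^G(χ) = Ind_H^G(χ) for every superclass function χ of H. -/

import Mathlib

/-!
STATEMENT 6: Let G, H, K be pattern groups on {1,…,n} over F_q with G = H ⋉ K
(H, K pattern subgroups of G, K normal in G, G = HK, H ∩ K = {1}).
If (k−1)(h−1) = 0 for all h ∈ H and k ∈ K, then SInd_H^G(χ) = Ind_H^G(χ)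
for every superclass function χ of H.
-/
open scoped Classical

noncomputable section

def setFinset {α : Type*} [Fintype α] (S : Set α) : Finset α :=
  Finset.univ.filter (· ∈ S)

/-- A strict partial order on `{1,…,n}` that is a subrelation of the usual order. -/
def IsPatternOrder {n : ℕ} (P : Fin n → Fin n → Prop) : Prop :=
  (∀ i j, P i j → i < j) ∧ ∀ i j k, P i j → P j k → P i k

/-- The pattern group `U_P` of unipotent upper-triangular matrices supported on `P`. -/
def patternGroup (F : Type*) [Field F] {n : ℕ} (P : Fin n → Fin n → Prop) :
    Set (Matrix (Fin n) (Fin n) F) :=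
  {u | (∀ i, u i i = 1) ∧ ∀ i j, i ≠ j → u i j ≠ 0 → P i j}

/-- `χ` is constant on the superclasses of `G`: `u ~ v` iff `v − 1 ∈ G(u−1)G`. -/
def IsSuperclassFn {A : Type*} [Ring A] (G : Set A) (χ : A → ℂ) : Prop :=
  ∀ u ∈ G, ∀ v ∈ G, (∃ x ∈ G, ∃ y ∈ G, v - 1 = x * (u - 1) * y) → χ u = χ v

/-- Superinduction `SInd_H^G(χ)(g) = (1/(|G||H|)) Σ_{x,y∈G} χ̇(x(g−1)y + 1)`. -/
def SInd {A : Type*} [Ring A] [Fintype A] (G H : Set A) (χ : A → ℂ) (g : A) : ℂ :=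
  (((setFinset G).card : ℂ) * ((setFinset H).card : ℂ))⁻¹ *
    ∑ x ∈ setFinset G, ∑ y ∈ setFinset G,
      if x * (g - 1) * y + 1 ∈ H then χ (x * (g - 1) * y + 1) else 0

/-- Induction `Ind_H^G(χ)(g) = (1/|H|) Σ_{y∈G} χ̇(y⁻¹ g y)`. -/
def Ind {A : Type*} [Ring A] [Fintype A] (G H : Set A) (χ : A → ℂ) (g : A) : ℂ :=
  ((setFinset H).card : ℂ)⁻¹ *
    ∑ y ∈ setFinset G,
      if Ring.inverse y * g * y ∈ H then χ (Ring.inverse y * g * y) else 0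

/-! ### Auxiliary lemmas -/

@[simp] lemma mem_setFinset {α : Type*} [Fintype α] {S : Set α} {x : α} :
    x ∈ setFinset S ↔ x ∈ S := by
  simp [setFinset]

section PatternAux

variable {F : Type*} [Field F] {n : ℕ} {P : Fin n → Fin n → Prop}

/-- Strictly `P`-supported matrices. -/
def npat (P : Fin n → Fin n → Prop) : Set (Matrix (Fin n) (Fin n) F) :=
  {m | ∀ i j, m i j ≠ 0 → P i j}

lemma npat_add {a b : Matrix (Fin n) (Fin n) F} (ha : a ∈ npat P) (hb : b ∈ npat P) :
    a + b ∈ npat P := by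
  intro i j h
  by_cases h1 : a i j = 0
  · exact hb i j (by simpa [Matrix.add_apply, h1] using h)
  · exact ha i j h1

lemma npat_neg {a : Matrix (Fin n) (Fin n) F} (ha : a ∈ npat P) : -a ∈ npat P := by
  intro i j h
  exact ha i j (by simpa using h)

lemma npat_mul (hP : ∀ i j k, P i j → P j k → P i k) {a b : Matrix (Fin n) (Fin n) F}
    (ha : a ∈ npat P) (hb : b ∈ npat P) : a * b ∈ npat P := by
  intro i j h
  rw [Matrix.mul_apply] at h
  obtain ⟨k, -, hk⟩ := Finset.exists_ne_zero_of_sum_ne_zero h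
  exact hP _ _ _ (ha i k (left_ne_zero_of_mul hk)) (hb k j (right_ne_zero_of_mul hk))

lemma mem_pg_iff (hP : IsPatternOrder P) {u : Matrix (Fin n) (Fin n) F} :
    u ∈ patternGroup F P ↔ u - 1 ∈ npat P := by
  constructor
  · rintro ⟨h1, h2⟩ i j h
    rcases eq_or_ne i j with rfl | hij
    · simp [Matrix.sub_apply, h1 i, Matrix.one_apply_eq] at h
    · exact h2 i j hij (by simpa [Matrix.sub_apply, Matrix.one_apply_ne hij] using h)
  · intro h
    constructor
    · intro i
      by_contra hc
      have : (u - 1) i i ≠ 0 := by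
        simp only [Matrix.sub_apply, Matrix.one_apply_eq]
        exact sub_ne_zero.2 hc
      exact absurd (hP.1 i i (h i i this)) (lt_irrefl i)
    · intro i j hij hne
      exact h i j (by simpa [Matrix.sub_apply, Matrix.one_apply_ne hij] using hne)

lemma pg_one : (1 : Matrix (Fin n) (Fin n) F) ∈ patternGroup F P :=
  ⟨fun i => Matrix.one_apply_eq i, fun i j hij hne => absurd (Matrix.one_apply_ne hij) hne⟩

lemma pg_mul (hP : IsPatternOrder P) {u v : Matrix (Fin n) (Fin n) F}
    (hu : u ∈ patternGroup F P) (hv : v ∈ patternGroup F P) : u * v ∈ patternGroup F P := by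
  rw [mem_pg_iff hP] at *
  have e : u * v - 1 = (u - 1) * (v - 1) + (u - 1) + (v - 1) := by noncomm_ring
  rw [e]
  exact npat_add (npat_add (npat_mul hP.2 hu hv) hu) hv

lemma pg_mul_npat (hP : IsPatternOrder P) {a m b : Matrix (Fin n) (Fin n) F}
    (ha : a ∈ patternGroup F P) (hm : m ∈ npat P) (hb : b ∈ patternGroup F P) :
    a * m * b ∈ npat P := by
  rw [mem_pg_iff hP] at ha hb
  have e : a * m * b = m + (a - 1) * m + m * (b - 1) + (a - 1) * m * (b - 1) := by noncomm_ring
  rw [e]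
  exact npat_add (npat_add (npat_add hm (npat_mul hP.2 ha hm)) (npat_mul hP.2 hm hb))
    (npat_mul hP.2 (npat_mul hP.2 ha hm) hb)

lemma npat_pow_zero (hlt : ∀ i j, P i j → i < j) {m : Matrix (Fin n) (Fin n) F}
    (hm : m ∈ npat P) : m ^ n = 0 := by
  have key : ∀ k : ℕ, ∀ i j : Fin n, (j : ℕ) < (i : ℕ) + k → (m ^ k) i j = 0 := by
    intro k
    induction k with
    | zero =>
      intro i j h
      simp only [pow_zero]
      exact Matrix.one_apply_ne (fun e => by subst e; omega)
    | succ k ih =>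
      intro i j h
      rw [pow_succ, Matrix.mul_apply]
      apply Finset.sum_eq_zero
      intro l _
      by_cases hl : (l : ℕ) < (i : ℕ) + k
      · simp [ih i l hl]
      · have : m l j = 0 := by
          by_contra hc
          have hlj := hlt l j (hm l j hc)
          have : (l : ℕ) < (j : ℕ) := hlj
          omega
        simp [this]
  ext i j
  have hj : (j : ℕ) < (i : ℕ) + n := by have := j.isLt; omega
  simpa using key n i j hj

lemma npat_pow_succ {m : Matrix (Fin n) (Fin n) F} (hP : ∀ i j k, P i j → P j k → P i k)
    (hm : m ∈ npat P) : ∀ N : ℕ, m ^ (N + 1) ∈ npat P := by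
  intro N
  induction N with
  | zero => simpa using hm
  | succ N ih => rw [pow_succ]; exact npat_mul hP ih hm

lemma pg_exists_inv (hP : IsPatternOrder P) {u : Matrix (Fin n) (Fin n) F}
    (hu : u ∈ patternGroup F P) :
    ∃ v ∈ patternGroup F P, u * v = 1 ∧ v * u = 1 := by
  rcases Nat.eq_zero_or_pos n with hn | hn
  · subst hn
    refine ⟨1, pg_one, ?_, ?_⟩ <;> · ext i j; exact i.elim0
  · rw [mem_pg_iff hP] at hu
    set m : Matrix (Fin n) (Fin n) F := u - 1 with hm
    have hu' : u = 1 + m := by rw [hm]; abel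
    have hmem : -m ∈ npat P := npat_neg hu
    have hnil : (-m) ^ n = 0 := npat_pow_zero hP.1 hmem
    set v : Matrix (Fin n) (Fin n) F := ∑ i ∈ Finset.range n, (-m) ^ i with hv
    have hx1 : (-m) - 1 = -u := by rw [hu']; abel
    have h1 : v * u = 1 := by
      have h0 := geom_sum_mul (-m) n
      rw [hx1, hnil, ← hv, zero_sub] at h0
      have h4 : -(v * u) = -1 := by rw [← h0]; noncomm_ring
      exact neg_injective h4
    have h2 : u * v = 1 := by
      have h0 := mul_geom_sum (-m) n
      rw [hx1, hnil, ← hv, zero_sub] at h0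
      have h4 : -(u * v) = -1 := by rw [← h0]; noncomm_ring
      exact neg_injective h4
    refine ⟨v, ?_, h2, h1⟩
    rw [mem_pg_iff hP]
    obtain ⟨N, rfl⟩ : ∃ N, n = N + 1 := ⟨n - 1, by omega⟩
    have : v - 1 = ∑ i ∈ Finset.range N, (-m) ^ (i + 1) := by
      rw [hv, Finset.sum_range_succ']
      simp
    rw [this]
    have : ∀ s : Finset ℕ, (∑ i ∈ s, (-m) ^ (i + 1)) ∈ npat P := by
      intro s
      induction s using Finset.induction with
      | empty =>
        simp only [Finset.sum_empty]
        intro i j h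
        simp at h
      | insert _ _ hx ih =>
        rw [Finset.sum_insert hx]
        exact npat_add (npat_pow_succ hP.2 hmem _) ih
    exact this _

end PatternAux

lemma ring_inverse_eq {A : Type*} [Ring A] {u v : A} (h1 : u * v = 1) (h2 : v * u = 1) :
    Ring.inverse u = v :=
  Ring.inverse_unit ⟨u, v, h1, h2⟩

lemma mul_inv_pair {A : Type*} [Ring A] {a b a' b' : A} (ha : a * a' = 1) (ha' : a' * a = 1)
    (hb : b * b' = 1) (hb' : b' * b = 1) : (a * b) * (b' * a') = 1 ∧ (b' * a') * (a * b) = 1 := by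
  constructor
  · calc (a * b) * (b' * a') = a * (b * b') * a' := by noncomm_ring
    _ = 1 := by rw [hb, mul_one, ha]
  · calc (b' * a') * (a * b) = b' * (a' * a) * b := by noncomm_ring
    _ = 1 := by rw [ha', mul_one, hb']

lemma sum_factor {A : Type*} [Ring A] [Fintype A] {G H K : Set A}
    (hdecomp : ∀ g ∈ G, ∃ h ∈ H, ∃ k ∈ K, g = h * k)
    (hmem : ∀ h ∈ H, ∀ k ∈ K, h * k ∈ G)
    (hinj : ∀ h₁ ∈ H, ∀ k₁ ∈ K, ∀ h₂ ∈ H, ∀ k₂ ∈ K, h₁ * k₁ = h₂ * k₂ → h₁ = h₂ ∧ k₁ = k₂)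
    (f : A → ℂ) :
    ∑ x ∈ setFinset G, f x = ∑ p ∈ setFinset H ×ˢ setFinset K, f (p.1 * p.2) := by
  refine (Finset.sum_bij (fun p (_ : p ∈ setFinset H ×ˢ setFinset K) => p.1 * p.2)
    ?_ ?_ ?_ ?_).symm
  · rintro ⟨h, k⟩ hp
    simp only [Finset.mem_product, mem_setFinset] at hp ⊢
    exact hmem h hp.1 k hp.2
  · rintro ⟨h₁, k₁⟩ hp₁ ⟨h₂, k₂⟩ hp₂ heq
    simp only [Finset.mem_product, mem_setFinset] at hp₁ hp₂
    obtain ⟨e1, e2⟩ := hinj _ hp₁.1 _ hp₁.2 _ hp₂.1 _ hp₂.2 heq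
    simp [Prod.ext_iff, e1, e2]
  · intro g hg
    simp only [mem_setFinset] at hg
    obtain ⟨h, hh, k, hk, rfl⟩ := hdecomp g hg
    exact ⟨(h, k), by simp [Finset.mem_product, hh, hk], rfl⟩
  · intros; rfl

theorem sind_eq_ind_of_semidirect_product
    {n : ℕ} (F : Type*) [Field F] [Fintype F]
    (PG PH PK : Fin n → Fin n → Prop)
    (hPG : IsPatternOrder PG) (hPH : IsPatternOrder PH) (hPK : IsPatternOrder PK)
    (hHG : ∀ i j, PH i j → PG i j) (hKG : ∀ i j, PK i j → PG i j)
    (hnormal : ∀ g ∈ patternGroup F PG, ∀ k ∈ patternGroup F PK,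
      g * k * g⁻¹ ∈ patternGroup F PK)
    (hprod : ∀ g ∈ patternGroup F PG, ∃ h ∈ patternGroup F PH, ∃ k ∈ patternGroup F PK,
      g = h * k)
    (hint : ∀ u : Matrix (Fin n) (Fin n) F,
      u ∈ patternGroup F PH → u ∈ patternGroup F PK → u = 1)
    (hzero : ∀ h ∈ patternGroup F PH, ∀ k ∈ patternGroup F PK, (k - 1) * (h - 1) = 0) :
    ∀ χ : Matrix (Fin n) (Fin n) F → ℂ, IsSuperclassFn (patternGroup F PH) χ →
      ∀ g ∈ patternGroup F PG,
        SInd (patternGroup F PG) (patternGroup F PH) χ g =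
          Ind (patternGroup F PG) (patternGroup F PH) χ g := by
  intro χ hχ g hg
  set Gs := patternGroup F PG with hGs
  set Hs := patternGroup F PH with hHs
  set Ks := patternGroup F PK with hKs
  have hHsub : Hs ⊆ Gs := fun u hu =>
    ⟨hu.1, fun i j hij hne => hHG i j (hu.2 i j hij hne)⟩
  have hKsub : Ks ⊆ Gs := fun u hu =>
    ⟨hu.1, fun i j hij hne => hKG i j (hu.2 i j hij hne)⟩
  have invH : ∀ u ∈ Hs, ∃ v ∈ Hs, u * v = 1 ∧ v * u = 1 := fun u hu => pg_exists_inv hPH hu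
  have invK : ∀ u ∈ Ks, ∃ v ∈ Ks, u * v = 1 ∧ v * u = 1 := fun u hu => pg_exists_inv hPK hu
  have invG : ∀ u ∈ Gs, ∃ v ∈ Gs, u * v = 1 ∧ v * u = 1 := fun u hu => pg_exists_inv hPG hu
  have mulH : ∀ u ∈ Hs, ∀ v ∈ Hs, u * v ∈ Hs := fun u hu v hv => pg_mul hPH hu hv
  have mulK : ∀ u ∈ Ks, ∀ v ∈ Ks, u * v ∈ Ks := fun u hu v hv => pg_mul hPK hu hv
  -- the extended function
  set f : Matrix (Fin n) (Fin n) F → ℂ :=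
    fun m => if m + 1 ∈ Hs then χ (m + 1) else 0 with hf
  -- H-biinvariance of f
  have hbi : ∀ a ∈ Hs, ∀ b ∈ Hs, ∀ m, f (a * m * b) = f m := by
    intro a ha b hb m
    obtain ⟨a', ha', haa', ha'a⟩ := invH a ha
    obtain ⟨b', hb', hbb', hb'b⟩ := invH b hb
    by_cases hm : m + 1 ∈ Hs
    · have hmn : m ∈ npat PH := by
        have := (mem_pg_iff hPH).1 hm
        simpa using this
      have hm' : a * m * b + 1 ∈ Hs := by
        rw [hHs, mem_pg_iff hPH]
        simpa using pg_mul_npat hPH ha hmn hb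
      have hval : χ (m + 1) = χ (a * m * b + 1) := by
        refine hχ (m + 1) hm (a * m * b + 1) hm' ⟨a, ha, b, hb, by noncomm_ring⟩
      simp only [hf]
      rw [if_pos hm', if_pos hm, hval]
    · have hm' : a * m * b + 1 ∉ Hs := by
        intro hc
        have hcn : a * m * b ∈ npat PH := by
          have := (mem_pg_iff hPH).1 hc
          simpa using this
        have : a' * (a * m * b) * b' = m := by
          calc a' * (a * m * b) * b' = (a' * a) * (m * (b * b')) := by noncomm_ring
          _ = m := by rw [ha'a, hbb', mul_one, one_mul]
        have hmn : m ∈ npat PH := this ▸ pg_mul_npat hPH ha' hcn hb'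
        exact hm (by rw [hHs, mem_pg_iff hPH]; simpa using hmn)
      simp only [hf]
      rw [if_neg hm', if_neg hm]
  -- K-left-invariance of f
  have hKi : ∀ k ∈ Ks, ∀ m, f (k * m) = f m := by
    intro k hk m
    obtain ⟨k', hk', hkk', hk'k⟩ := invK k hk
    by_cases hm : m + 1 ∈ Hs
    · have hz : (k - 1) * ((m + 1) - 1) = 0 := hzero (m + 1) hm k hk
      have hz' : (k - 1) * m = 0 := by simpa using hz
      have : k * m = m := by
        have h2 : k * m - m = 0 := by rw [← hz']; noncomm_ring
        exact sub_eq_zero.1 h2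
      rw [this]
    · have hm' : k * m + 1 ∉ Hs := by
        intro hc
        have hz : (k' - 1) * ((k * m + 1) - 1) = 0 := hzero (k * m + 1) hc k' hk'
        have hz' : (k' - 1) * (k * m) = 0 := by simpa using hz
        have e : m = k * m := by
          have h2 : k' * (k * m) = k * m := by
            have : k' * (k * m) - k * m = 0 := by rw [← hz']; noncomm_ring
            exact sub_eq_zero.1 this
          calc m = (k' * k) * m := by rw [hk'k, one_mul]
          _ = k' * (k * m) := by rw [mul_assoc]
          _ = k * m := h2
        exact hm (by rw [e]; exact hc)
      simp only [hf]
      rw [if_neg hm', if_neg hm]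
  -- HK and KH decompositions
  have hinjHK : ∀ h₁ ∈ Hs, ∀ k₁ ∈ Ks, ∀ h₂ ∈ Hs, ∀ k₂ ∈ Ks,
      h₁ * k₁ = h₂ * k₂ → h₁ = h₂ ∧ k₁ = k₂ := by
    intro h₁ hh₁ k₁ hk₁ h₂ hh₂ k₂ hk₂ he
    obtain ⟨h₂', hh₂', h2i, h2i'⟩ := invH h₂ hh₂
    obtain ⟨k₁', hk₁', k1i, k1i'⟩ := invK k₁ hk₁
    have e1 : h₂' * (h₁ * k₁) * k₁' = h₂' * h₁ := by
      rw [mul_assoc h₂', mul_assoc h₁, k1i, mul_one]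
    have e2 : h₂' * (h₂ * k₂) * k₁' = k₂ * k₁' := by
      rw [← mul_assoc h₂', h2i', one_mul]
    have key : h₂' * h₁ = k₂ * k₁' := by rw [← e1, he, e2]
    have hone : h₂' * h₁ = 1 :=
      hint _ (mulH _ hh₂' _ hh₁) (key ▸ mulK _ hk₂ _ hk₁')
    have hone' : k₂ * k₁' = 1 := key ▸ hone
    constructor
    · calc h₁ = (h₂ * h₂') * h₁ := by rw [h2i, one_mul]
      _ = h₂ * (h₂' * h₁) := by rw [mul_assoc]
      _ = h₂ := by rw [hone, mul_one]
    · calc k₁ = (k₂ * k₁') * k₁ := by rw [hone', one_mul]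
      _ = k₂ * (k₁' * k₁) := by rw [mul_assoc]
      _ = k₂ := by rw [k1i', mul_one]
  have hinjKH : ∀ k₁ ∈ Ks, ∀ h₁ ∈ Hs, ∀ k₂ ∈ Ks, ∀ h₂ ∈ Hs,
      k₁ * h₁ = k₂ * h₂ → k₁ = k₂ ∧ h₁ = h₂ := by
    intro k₁ hk₁ h₁ hh₁ k₂ hk₂ h₂ hh₂ he
    obtain ⟨k₂', hk₂', k2i, k2i'⟩ := invK k₂ hk₂
    obtain ⟨h₁', hh₁', h1i, h1i'⟩ := invH h₁ hh₁
    have e1 : k₂' * (k₁ * h₁) * h₁' = k₂' * k₁ := by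
      rw [mul_assoc k₂', mul_assoc k₁, h1i, mul_one]
    have e2 : k₂' * (k₂ * h₂) * h₁' = h₂ * h₁' := by
      rw [← mul_assoc k₂', k2i', one_mul]
    have key : k₂' * k₁ = h₂ * h₁' := by rw [← e1, he, e2]
    have hone : k₂' * k₁ = 1 :=
      hint _ (key ▸ mulH _ hh₂ _ hh₁') (mulK _ hk₂' _ hk₁)
    have hone' : h₂ * h₁' = 1 := key ▸ hone
    constructor
    · calc k₁ = (k₂ * k₂') * k₁ := by rw [k2i, one_mul]
      _ = k₂ * (k₂' * k₁) := by rw [mul_assoc]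
      _ = k₂ := by rw [hone, mul_one]
    · calc h₁ = (h₂ * h₁') * h₁ := by rw [hone', one_mul]
      _ = h₂ * (h₁' * h₁) := by rw [mul_assoc]
      _ = h₂ := by rw [h1i', mul_one]
  have hdecompKH : ∀ x ∈ Gs, ∃ k ∈ Ks, ∃ h ∈ Hs, x = k * h := by
    intro x hx
    obtain ⟨h, hh, k, hk, rfl⟩ := hprod x hx
    obtain ⟨h', hh', hi, hi'⟩ := invH h hh
    have hinv : h⁻¹ = h' := Matrix.inv_eq_right_inv hi
    have hkk : h * k * h⁻¹ ∈ Ks := hnormal h (hHsub hh) k hk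
    rw [hinv] at hkk
    refine ⟨h * k * h', hkk, h, hh, ?_⟩
    rw [mul_assoc, hi', mul_one]
  have hmemHK : ∀ h ∈ Hs, ∀ k ∈ Ks, h * k ∈ Gs := fun h hh k hk =>
    pg_mul hPG (hHsub hh) (hKsub hk)
  have hmemKH : ∀ k ∈ Ks, ∀ h ∈ Hs, k * h ∈ Gs := fun k hk h hh =>
    pg_mul hPG (hKsub hk) (hHsub hh)
  -- finsets
  set sG := setFinset Gs
  set sH := setFinset Hs
  set sK := setFinset Ks
  have cHne : ((sH.card : ℂ)) ≠ 0 := by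
    have : (1 : Matrix (Fin n) (Fin n) F) ∈ sH := by
      simp only [sH, mem_setFinset]
      exact pg_one
    exact Nat.cast_ne_zero.2 (Finset.card_ne_zero_of_mem this)
  have cKne : ((sK.card : ℂ)) ≠ 0 := by
    have : (1 : Matrix (Fin n) (Fin n) F) ∈ sK := by
      simp only [sK, mem_setFinset]
      exact pg_one
    exact Nat.cast_ne_zero.2 (Finset.card_ne_zero_of_mem this)
  -- card G = card H * card K
  have hcard : (sG.card : ℂ) = (sH.card : ℂ) * (sK.card : ℂ) := by
    have := sum_factor hprod hmemHK hinjHK (fun _ => (1 : ℂ))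
    simpa [Finset.sum_const, Finset.card_product, nsmul_eq_mul, Nat.cast_mul] using this
  -- the common value
  set T : ℂ := ∑ k ∈ sK, f ((g - 1) * k) with hT
  -- inner Σ over sK ×ˢ sH of f ((g-1) * q.1) equals cH * T
  have hKH_const : ∑ q ∈ sK ×ˢ sH, f ((g - 1) * q.1) = (sH.card : ℂ) * T := by
    rw [Finset.sum_product]
    simp only [Finset.sum_const, nsmul_eq_mul]
    rw [hT, Finset.mul_sum]
  -- SInd sum
  have hSsum : (∑ x ∈ sG, ∑ y ∈ sG,
      if x * (g - 1) * y + 1 ∈ Hs then χ (x * (g - 1) * y + 1) else 0)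
      = (sH.card : ℂ) * (sK.card : ℂ) * ((sH.card : ℂ) * T) := by
    have step1 : (∑ x ∈ sG, ∑ y ∈ sG,
        if x * (g - 1) * y + 1 ∈ Hs then χ (x * (g - 1) * y + 1) else 0)
        = ∑ p ∈ sH ×ˢ sK, ∑ q ∈ sK ×ˢ sH, f ((p.1 * p.2) * (g - 1) * (q.1 * q.2)) := by
      rw [sum_factor hprod hmemHK hinjHK]
      apply Finset.sum_congr rfl
      intro p _
      rw [sum_factor hdecompKH hmemKH hinjKH]
    rw [step1]
    have step2 : ∀ p ∈ sH ×ˢ sK, ∀ q ∈ sK ×ˢ sH,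
        f ((p.1 * p.2) * (g - 1) * (q.1 * q.2)) = f ((g - 1) * q.1) := by
      rintro ⟨h₁, k₁⟩ hp ⟨k₂, h₂⟩ hq
      simp only [Finset.mem_product, mem_setFinset, sH, sK] at hp hq
      have e : (h₁ * k₁) * (g - 1) * (k₂ * h₂) = h₁ * (k₁ * ((g - 1) * k₂)) * h₂ := by
        noncomm_ring
      rw [e, hbi h₁ hp.1 h₂ hq.2, hKi k₁ hp.2]
    rw [Finset.sum_congr rfl (fun p hp => Finset.sum_congr rfl (fun q hq => step2 p hp q hq))]
    rw [Finset.sum_congr rfl (fun p _ => hKH_const)]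
    rw [Finset.sum_const, Finset.card_product, nsmul_eq_mul, Nat.cast_mul]
  -- Ind sum
  have hIsum : (∑ y ∈ sG,
      if Ring.inverse y * g * y ∈ Hs then χ (Ring.inverse y * g * y) else 0)
      = (sH.card : ℂ) * T := by
    have step0 : ∀ y ∈ sG, (if Ring.inverse y * g * y ∈ Hs then χ (Ring.inverse y * g * y) else 0)
        = f (Ring.inverse y * (g - 1) * y) := by
      intro y hy
      simp only [mem_setFinset, sG] at hy
      obtain ⟨y', hy', yi, yi'⟩ := invG y hy
      have hr : Ring.inverse y = y' := ring_inverse_eq yi yi'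
      have e : Ring.inverse y * (g - 1) * y + 1 = Ring.inverse y * g * y := by
        rw [hr]
        calc y' * (g - 1) * y + 1 = y' * g * y - y' * y + 1 := by noncomm_ring
        _ = y' * g * y := by rw [yi']; abel
      simp only [hf, e]
    rw [Finset.sum_congr rfl step0]
    rw [sum_factor hdecompKH hmemKH hinjKH]
    have step1 : ∀ q ∈ sK ×ˢ sH,
        f (Ring.inverse (q.1 * q.2) * (g - 1) * (q.1 * q.2)) = f ((g - 1) * q.1) := by
      rintro ⟨k, h⟩ hq
      simp only [Finset.mem_product, mem_setFinset, sK, sH] at hq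
      obtain ⟨k', hk', ki, ki'⟩ := invK k hq.1
      obtain ⟨h', hh', hi, hi'⟩ := invH h hq.2
      obtain ⟨u1, u2⟩ := mul_inv_pair ki ki' hi hi'
      have hr : Ring.inverse (k * h) = h' * k' := ring_inverse_eq u1 u2
      have e : (h' * k') * (g - 1) * (k * h) = h' * (k' * ((g - 1) * k)) * h := by
        noncomm_ring
      show f (Ring.inverse (k * h) * (g - 1) * (k * h)) = f ((g - 1) * k)
      rw [hr, e, hbi h' hh' h hq.2, hKi k' hk']
    rw [Finset.sum_congr rfl step1]
    exact hKH_const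
  -- conclude
  rw [SInd, Ind]
  show ((sG.card : ℂ) * (sH.card : ℂ))⁻¹ * _ = ((sH.card : ℂ))⁻¹ * _
  rw [hSsum, hIsum, hcard]
  field_simp
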